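/- Optimal single arbitrage amount: if x* < L_x, then for every q ≥ 0 the miner's profit U(q) := (F_y(x*) − F_y(x*+(1−f)q))·p_y − q·p_x from executing Sell(X,q) at state (x*, F_y(x*)) satisfies U(q) ≤ U((L_x − x*)/(1−f)), and moreover U((L_x − x*)/(1−f)) > 0. -/

import Mathlib

/-- **optimal single arbitrage amount.**
If `x* < L_x`, then for every `q ≥ 0` the miner's profit
`U(q) := (F_y(x*) − F_y(x*+(1−f)q))·p_y − q·p_x` from executing `Sell(X,q)` at state
`(x*, F_y(x*))` satisfies `U(q) ≤ U((L_x − x*)/(1−f))`, and moreover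
`U((L_x − x*)/(1−f)) > 0`.

The CFMM is given by a differentiable, strictly decreasing reserve curve `Fy` on `(0,∞)`,
with marginal exchange rate `r x = −Fy′ x` positive and strictly decreasing there;
`p_x, p_y > 0` are the exogenous prices, `f ∈ [0,1)` the fee fraction, and `L_x` the unique
point with `r L_x = (1/(1−f))·(p_x/p_y)`. -/
theorem sellX_optimal_amount_of_lt_Lx
    (Fy : ℝ → ℝ) (f px py Lx xstar : ℝ)
    (hf0 : 0 ≤ f) (hf1 : f < 1)
    (hpx : 0 < px) (hpy : 0 < py)
    (hFy_diff : ∀ x ∈ Set.Ioi (0 : ℝ), DifferentiableAt ℝ Fy x)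
    (hFy_anti : StrictAntiOn Fy (Set.Ioi 0))
    (hr_pos : ∀ x ∈ Set.Ioi (0 : ℝ), 0 < -deriv Fy x)
    (hr_anti : StrictAntiOn (fun x => -deriv Fy x) (Set.Ioi 0))
    (hLx_pos : 0 < Lx)
    (hLx : -deriv Fy Lx = (1 / (1 - f)) * (px / py))
    (hxstar_pos : 0 < xstar)
    (hxstar : xstar < Lx) :
    (∀ q : ℝ, 0 ≤ q →
        (Fy xstar - Fy (xstar + (1 - f) * q)) * py - q * px ≤
          (Fy xstar - Fy (xstar + (1 - f) * ((Lx - xstar) / (1 - f)))) * py -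
            ((Lx - xstar) / (1 - f)) * px) ∧
      0 < (Fy xstar - Fy (xstar + (1 - f) * ((Lx - xstar) / (1 - f)))) * py -
            ((Lx - xstar) / (1 - f)) * px := by
  have hf' : (0:ℝ) < 1 - f := by linarith
  set c : ℝ := px / (1 - f) with hc
  have hcpos : 0 < c := div_pos hpx hf'
  set g : ℝ → ℝ := fun t => (Fy xstar - Fy t) * py - (t - xstar) * c with hg
  have hderiv : ∀ t ∈ Set.Ioi (0:ℝ), HasDerivAt g (-(deriv Fy t) * py - c) t := by
    intro t ht
    have h1 := (hFy_diff t ht).hasDerivAt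
    have h2 : HasDerivAt (fun t => (Fy xstar - Fy t) * py - (t - xstar) * c)
        ((0 - deriv Fy t) * py - 1 * c) t :=
      (((hasDerivAt_const t (Fy xstar)).sub h1).mul_const py).sub
        (((hasDerivAt_id t).sub_const xstar).mul_const c)
    convert h2 using 1
    ring
  have hcont : ContinuousOn g (Set.Ioi 0) := fun t ht =>
    ((hderiv t ht).differentiableAt).continuousAt.continuousWithinAt
  have key : ∀ t ∈ Set.Ioi (0:ℝ), t < Lx → 0 < -(deriv Fy t) * py - c := by
    intro t ht htl
    have hlt : -deriv Fy Lx < -deriv Fy t := hr_anti ht (Set.mem_Ioi.mpr hLx_pos) htl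
    rw [hLx] at hlt
    have h3 : (1/(1-f))*(px/py)*py < (-deriv Fy t)*py := by nlinarith
    have h4 : (1/(1-f))*(px/py)*py = c := by rw [hc]; field_simp
    linarith
  have key' : ∀ t ∈ Set.Ioi (0:ℝ), Lx < t → -(deriv Fy t) * py - c < 0 := by
    intro t ht htl
    have hlt : -deriv Fy t < -deriv Fy Lx := hr_anti (Set.mem_Ioi.mpr hLx_pos) ht htl
    rw [hLx] at hlt
    have h3 : (-deriv Fy t)*py < (1/(1-f))*(px/py)*py := by nlinarith
    have h4 : (1/(1-f))*(px/py)*py = c := by rw [hc]; field_simp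
    linarith
  have hsub1 : Set.Icc xstar Lx ⊆ Set.Ioi (0:ℝ) := fun t ht => lt_of_lt_of_le hxstar_pos ht.1
  have hsub2 : Set.Ici Lx ⊆ Set.Ioi (0:ℝ) := fun t ht => lt_of_lt_of_le hLx_pos ht
  have hmono : StrictMonoOn g (Set.Icc xstar Lx) := by
    apply strictMonoOn_of_deriv_pos (convex_Icc _ _) (hcont.mono hsub1)
    intro t ht
    rw [interior_Icc] at ht
    have ht0 : t ∈ Set.Ioi (0:ℝ) := lt_trans hxstar_pos ht.1
    rw [(hderiv t ht0).deriv]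
    exact key t ht0 ht.2
  have hanti : StrictAntiOn g (Set.Ici Lx) := by
    apply strictAntiOn_of_deriv_neg (convex_Ici _) (hcont.mono hsub2)
    intro t ht
    rw [interior_Ici] at ht
    have ht0 : t ∈ Set.Ioi (0:ℝ) := lt_trans hLx_pos ht
    rw [(hderiv t ht0).deriv]
    exact key' t ht0 ht
  have hqstar : xstar + (1 - f) * ((Lx - xstar) / (1 - f)) = Lx := by field_simp; ring
  have hU : ∀ q : ℝ, (Fy xstar - Fy (xstar + (1-f)*q)) * py - q * px
      = g (xstar + (1-f)*q) := by
    intro q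
    simp only [hg]
    have h5 : (xstar + (1-f)*q - xstar) * c = q * px := by
      rw [hc]; field_simp; ring
    rw [h5]
  have hgLx : 0 < g Lx := by
    have h0 : g xstar = 0 := by simp [hg]
    have := hmono (Set.mem_Icc.mpr ⟨le_refl _, le_of_lt hxstar⟩)
      (Set.mem_Icc.mpr ⟨le_of_lt hxstar, le_refl _⟩) hxstar
    linarith
  constructor
  · intro q hq
    rw [hU, hU, hqstar]
    set t := xstar + (1-f)*q with htdef
    have htx : xstar ≤ t := by nlinarith
    rcases le_or_gt t Lx with h | h
    · exact hmono.monotoneOn (Set.mem_Icc.mpr ⟨htx, h⟩)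
        (Set.mem_Icc.mpr ⟨le_of_lt hxstar, le_refl _⟩) h
    · exact le_of_lt (hanti (Set.mem_Ici.mpr (le_refl _)) (Set.mem_Ici.mpr (le_of_lt h)) h)
  · rw [hU, hqstar]
    exact hgLx
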